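/- (Two-sided bound on ratios of q-factorials) For all natural numbers n and k, one has [n]_q! / ((1-q)^k · C(|q|)) ≤ [n+k]_q! ≤ (D(q)/(1-q)^k) · [n]_q!. -/

import Mathlib

/-- The q-integer `[n]_q = (1 - q^n)/(1 - q)`. -/
noncomputable def qInt (q : ℝ) (n : ℕ) : ℝ := (1 - q ^ n) / (1 - q)

/-- The q-factorial `[n]_q! = [1]_q ⋯ [n]_q`, with `[0]_q! = 1`. -/
noncomputable def qFact (q : ℝ) : ℕ → ℝ
  | 0 => 1
  | n + 1 => qFact q n * qInt q (n + 1)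

/-- The constant `C(t) = ∏_{i=1}^∞ (1 - t^i)⁻¹` for `0 ≤ t < 1`. -/
noncomputable def Cconst (t : ℝ) : ℝ := ∏' i : ℕ, (1 - t ^ (i + 1))⁻¹

/-- The constant `D(q) = ∏_{i=1}^∞ (1 + |q|^i)` for `-1 < q < 1`. -/
noncomputable def Dconst (q : ℝ) : ℝ := ∏' i : ℕ, (1 + |q| ^ (i + 1))

lemma aux_pow_lt_one {t : ℝ} (ht0 : 0 ≤ t) (ht1 : t < 1) (i : ℕ) : t ^ (i + 1) < 1 :=
  pow_lt_one₀ ht0 ht1 (Nat.succ_ne_zero i)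

lemma aux_summable_log_one_add {t : ℝ} (ht0 : 0 ≤ t) (ht1 : t < 1) :
    Summable (fun i : ℕ => Real.log (1 + t ^ (i + 1))) := by
  have hg : Summable (fun i : ℕ => t ^ (i + 1)) :=
    (summable_geometric_of_lt_one ht0 ht1).comp_injective (add_left_injective 1)
  refine Summable.of_nonneg_of_le (fun i => ?_) (fun i => ?_) hg
  · exact Real.log_nonneg (by nlinarith [pow_nonneg ht0 (i+1)])
  · calc Real.log (1 + t ^ (i + 1)) ≤ (1 + t ^ (i+1)) - 1 :=
        Real.log_le_sub_one_of_pos (by nlinarith [pow_nonneg ht0 (i+1)])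
      _ = t ^ (i+1) := by ring

lemma aux_summable_log_inv {t : ℝ} (ht0 : 0 ≤ t) (ht1 : t < 1) :
    Summable (fun i : ℕ => Real.log ((1 - t ^ (i + 1))⁻¹)) := by
  have hg : Summable (fun i : ℕ => t ^ (i + 1) / (1 - t)) :=
    ((summable_geometric_of_lt_one ht0 ht1).comp_injective (add_left_injective 1)).div_const _
  refine Summable.of_nonneg_of_le (fun i => ?_) (fun i => ?_) hg
  · refine Real.log_nonneg ?_
    have hpos : (0:ℝ) < 1 - t ^ (i + 1) := by nlinarith [aux_pow_lt_one ht0 ht1 i]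
    exact (one_le_inv₀ hpos).2 (by nlinarith [pow_nonneg ht0 (i+1)])
  · have hpos : 0 < 1 - t ^ (i + 1) := by nlinarith [aux_pow_lt_one ht0 ht1 i]
    have hle : t ^ (i + 1) ≤ t := by
      calc t ^ (i+1) ≤ t ^ 1 := pow_le_pow_of_le_one ht0 ht1.le (by omega)
        _ = t := pow_one t
    calc Real.log ((1 - t ^ (i+1))⁻¹) ≤ (1 - t ^ (i+1))⁻¹ - 1 :=
          Real.log_le_sub_one_of_pos (by positivity)
      _ = t ^ (i+1) / (1 - t ^ (i+1)) := by field_simp; ring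
      _ ≤ t ^ (i+1) / (1 - t) := by
          apply div_le_div_of_nonneg_left (pow_nonneg ht0 _) (by linarith) (by linarith)

/-- A finite product of terms `≥ 1` (with summable logs) is at most the infinite product. -/
lemma aux_prod_le_tprod {f : ℕ → ℝ} (h1 : ∀ i, 1 ≤ f i)
    (hs : Summable fun i => Real.log (f i)) (s : Finset ℕ) :
    ∏ i ∈ s, f i ≤ ∏' i, f i := by
  have hpos : ∀ i, 0 < f i := fun i => lt_of_lt_of_le one_pos (h1 i)
  have heq : (∏' i, f i) = Real.exp (∑' i, Real.log (f i)) := by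
    have := Real.rexp_tsum_eq_tprod hpos hs
    exact this.symm
  calc ∏ i ∈ s, f i = Real.exp (∑ i ∈ s, Real.log (f i)) := by
        rw [Real.exp_sum]
        exact Finset.prod_congr rfl fun i _ => (Real.exp_log (hpos i)).symm
    _ ≤ Real.exp (∑' i, Real.log (f i)) :=
        Real.exp_le_exp.2 (Summable.sum_le_tsum s (fun i _ => Real.log_nonneg (h1 i)) hs)
    _ = ∏' i, f i := heq.symm

lemma qFact_pos {q : ℝ} (hq₁ : -1 < q) (hq₂ : q < 1) (n : ℕ) : 0 < qFact q n := by
  induction n with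
  | zero => exact one_pos
  | succ m ih =>
    have h1 : q ^ (m+1) < 1 := by
      calc q ^ (m+1) ≤ |q ^ (m+1)| := le_abs_self _
        _ = |q| ^ (m+1) := abs_pow q (m+1)
        _ < 1 := pow_lt_one₀ (abs_nonneg q) (abs_lt.2 ⟨hq₁, hq₂⟩) (Nat.succ_ne_zero m)
    have : 0 < qInt q (m+1) := div_pos (by linarith) (by linarith)
    exact mul_pos ih this

lemma qFact_add (q : ℝ) (n k : ℕ) :
    qFact q (n + k) = qFact q n * ∏ j ∈ Finset.range k, qInt q (n + j + 1) := by
  induction k with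
  | zero => simp
  | succ m ih =>
    rw [Finset.prod_range_succ, ← mul_assoc, ← ih]
    show qFact q (n + m) * qInt q (n + m + 1) = _
    rfl


/-- Two-sided bound on ratios of q-factorials. -/
theorem qFact_ratio_bounds (q : ℝ) (hq₁ : -1 < q) (hq₂ : q < 1) (n k : ℕ) :
    qFact q n / ((1 - q) ^ k * Cconst |q|) ≤ qFact q (n + k) ∧
    qFact q (n + k) ≤ (Dconst q / (1 - q) ^ k) * qFact q n := by
  set t := |q| with htdef
  have ht0 : 0 ≤ t := abs_nonneg q
  have ht1 : t < 1 := abs_lt.2 ⟨hq₁, hq₂⟩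
  have hden : 0 < 1 - q := by linarith
  have hF : 0 < qFact q n := qFact_pos hq₁ hq₂ n
  have hpow : ∀ m : ℕ, (0:ℝ) < 1 - t ^ (m + 1) := fun m => by
    nlinarith [aux_pow_lt_one ht0 ht1 m]
  have hge1 : ∀ i : ℕ, (1:ℝ) ≤ (1 - t ^ (i + 1))⁻¹ := fun i =>
    (one_le_inv₀ (hpow i)).2 (by nlinarith [pow_nonneg ht0 (i+1)])
  set s : Finset ℕ := (Finset.range k).image (fun j => n + j) with hsdef
  have hC1 : (1:ℝ) ≤ Cconst t := by
    have := aux_prod_le_tprod hge1 (aux_summable_log_inv ht0 ht1) ∅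
    simpa [Cconst] using this
  have hCpos : (0:ℝ) < Cconst t := lt_of_lt_of_le one_pos hC1
  set P : ℝ := ∏ j ∈ Finset.range k, (1 - t ^ (n + j + 1)) with hPdef
  have hPpos : 0 < P := Finset.prod_pos fun j _ => hpow (n + j)
  have hPinv : P⁻¹ ≤ Cconst t := by
    have h1 : ∏ i ∈ s, (1 - t ^ (i + 1))⁻¹ ≤ Cconst t :=
      aux_prod_le_tprod hge1 (aux_summable_log_inv ht0 ht1) s
    have h2 : ∏ i ∈ s, (1 - t ^ (i + 1))⁻¹ = P⁻¹ := by
      rw [hsdef, Finset.prod_image (fun a _ b _ h => by omega), hPdef,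
        ← Finset.prod_inv_distrib]
    rwa [h2] at h1
  have hCP : (Cconst t)⁻¹ ≤ P := (inv_le_comm₀ hCpos hPpos).2 hPinv
  set Q : ℝ := ∏ j ∈ Finset.range k, (1 + t ^ (n + j + 1)) with hQdef
  have hQD : Q ≤ Dconst q := by
    have h1 : ∏ i ∈ s, (1 + t ^ (i + 1)) ≤ Dconst q :=
      aux_prod_le_tprod (fun i => by nlinarith [pow_nonneg ht0 (i+1)])
        (aux_summable_log_one_add ht0 ht1) s
    have h2 : ∏ i ∈ s, (1 + t ^ (i + 1)) = Q := by
      rw [hsdef, Finset.prod_image (fun a _ b _ h => by omega)]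
    rwa [h2] at h1
  -- pointwise bounds on qInt
  have habs : ∀ m : ℕ, q ^ m ≤ t ^ m ∧ -(t ^ m) ≤ q ^ m := fun m => by
    constructor
    · rw [htdef, ← abs_pow]; exact le_abs_self _
    · rw [htdef, ← abs_pow]; exact neg_abs_le _
  have hqIntpos : ∀ j : ℕ, 0 < qInt q (n + j + 1) := fun j => by
    have := (habs (n + j + 1)).1
    have := hpow (n + j)
    exact div_pos (by linarith) hden
  have hProdLow : P / (1 - q) ^ k ≤ ∏ j ∈ Finset.range k, qInt q (n + j + 1) := by
    have : ∏ j ∈ Finset.range k, ((1 - t ^ (n + j + 1)) / (1 - q))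
        ≤ ∏ j ∈ Finset.range k, qInt q (n + j + 1) := by
      refine Finset.prod_le_prod (fun j _ => div_nonneg (hpow (n+j)).le hden.le)
        (fun j _ => ?_)
      have h1 := (habs (n + j + 1)).1
      show _ ≤ (1 - q ^ (n + j + 1)) / (1 - q)
      exact (div_le_div_iff_of_pos_right hden).2 (by linarith)
    calc P / (1 - q) ^ k
        = ∏ j ∈ Finset.range k, ((1 - t ^ (n + j + 1)) / (1 - q)) := by
          rw [Finset.prod_div_distrib, Finset.prod_const, Finset.card_range]
      _ ≤ _ := this
  have hProdHigh : ∏ j ∈ Finset.range k, qInt q (n + j + 1) ≤ Q / (1 - q) ^ k := by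
    have : ∏ j ∈ Finset.range k, qInt q (n + j + 1)
        ≤ ∏ j ∈ Finset.range k, ((1 + t ^ (n + j + 1)) / (1 - q)) := by
      refine Finset.prod_le_prod (fun j _ => (hqIntpos j).le) (fun j _ => ?_)
      have h2 := (habs (n + j + 1)).2
      show (1 - q ^ (n + j + 1)) / (1 - q) ≤ _
      exact (div_le_div_iff_of_pos_right hden).2 (by linarith)
    calc ∏ j ∈ Finset.range k, qInt q (n + j + 1) ≤ _ := this
      _ = Q / (1 - q) ^ k := by
          rw [Finset.prod_div_distrib, Finset.prod_const, Finset.card_range]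
  rw [qFact_add q n k]
  constructor
  · calc qFact q n / ((1 - q) ^ k * Cconst t)
        = qFact q n * ((Cconst t)⁻¹ / (1 - q) ^ k) := by
          rw [div_eq_mul_inv, mul_inv, div_eq_mul_inv]
          ring
      _ ≤ qFact q n * (P / (1 - q) ^ k) := by
          gcongr
      _ ≤ qFact q n * ∏ j ∈ Finset.range k, qInt q (n + j + 1) :=
          mul_le_mul_of_nonneg_left hProdLow hF.le
  · calc qFact q n * ∏ j ∈ Finset.range k, qInt q (n + j + 1)
        ≤ qFact q n * (Q / (1 - q) ^ k) :=
          mul_le_mul_of_nonneg_left hProdHigh hF.le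
      _ ≤ qFact q n * (Dconst q / (1 - q) ^ k) := by
          apply mul_le_mul_of_nonneg_left _ hF.le
          gcongr
      _ = (Dconst q / (1 - q) ^ k) * qFact q n := mul_comm _ _
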